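/- Let A be a commutative monoid with zero. The set spec_c A of prime congruences on A, topologized by the subbasis of sets D(a,b) = {E : (a,b) ∉ E} for a, b ∈ A, is a compact topological space. -/

import Mathlib

/-- A congruence `E` on a commutative monoid with zero is prime if `1 ≁ 0` and
`a·f ∼ b·f` implies `a ∼ b` or `f ∼ 0`. -/
def IsPrimeCon {A : Type*} [CommMonoidWithZero A] (E : Con A) : Prop :=
  ¬ E 1 0 ∧ ∀ a b f : A, E (a * f) (b * f) → E a b ∨ E f 0

/-- The congruence spectrum: the set of prime congruences on `A`. -/
def SpecC (A : Type*) [CommMonoidWithZero A] : Type _ := {E : Con A // IsPrimeCon E}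

/-- The topology on `spec_c A` generated by the subbasic open sets
`D(a,b) = {E : (a,b) ∉ E}`. -/
instance SpecC.instTopologicalSpace (A : Type*) [CommMonoidWithZero A] :
    TopologicalSpace (SpecC A) :=
  TopologicalSpace.generateFrom
    {U | ∃ a b : A, U = {E : SpecC A | ¬ E.1 a b}}

open Classical in
/-- Encode a prime congruence as a Boolean-valued function on pairs. -/
noncomputable def SpecC.enc {A : Type*} [CommMonoidWithZero A] (E : SpecC A) :
    A × A → Bool := fun p => decide (E.1 p.1 p.2)

/-- The set of Boolean functions corresponding to prime congruences. -/
def SpecC.encSet (A : Type*) [CommMonoidWithZero A] : Set (A × A → Bool) :=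
  {f | (∀ a : A, f (a, a) = true) ∧
       (∀ a b : A, f (a, b) = true → f (b, a) = true) ∧
       (∀ a b c : A, f (a, b) = true → f (b, c) = true → f (a, c) = true) ∧
       (∀ a b c d : A, f (a, b) = true → f (c, d) = true → f (a * c, b * d) = true) ∧
       f (1, 0) = false ∧
       (∀ a b g : A, f (a * g, b * g) = true → f (a, b) = true ∨ f (g, 0) = true)}

lemma SpecC.isClosed_eval {A : Type*} [CommMonoidWithZero A] (p : A × A) (b : Bool) :
    IsClosed {f : A × A → Bool | f p = b} :=
  isClosed_eq (continuous_apply p) continuous_const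

lemma SpecC.isOpen_eval {A : Type*} [CommMonoidWithZero A] (p : A × A) (b : Bool) :
    IsOpen {f : A × A → Bool | f p = b} := by
  have h : {f : A × A → Bool | f p = b} = (fun f : A × A → Bool => f p) ⁻¹' {b} := rfl
  rw [h]
  exact (continuous_apply p).isOpen_preimage _ (isOpen_discrete _)

lemma SpecC.isClosed_imp {A : Type*} [CommMonoidWithZero A] (p q : A × A) :
    IsClosed {f : A × A → Bool | f p = true → f q = true} := by
  have : {f : A × A → Bool | f p = true → f q = true}
      = {f : A × A → Bool | f p = false} ∪ {f | f q = true} := by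
    ext f
    simp only [Set.mem_setOf_eq, Set.mem_union]
    cases hf : f p <;> simp
  rw [this]
  exact (SpecC.isClosed_eval p false).union (SpecC.isClosed_eval q true)

lemma SpecC.isClosed_encSet (A : Type*) [CommMonoidWithZero A] :
    IsClosed (SpecC.encSet A) := by
  have h1 : SpecC.encSet A =
      (⋂ a : A, {f : A × A → Bool | f (a, a) = true}) ∩
      (⋂ a : A, ⋂ b : A, {f | f (a, b) = true → f (b, a) = true}) ∩
      (⋂ a : A, ⋂ b : A, ⋂ c : A,
        {f | f (a, b) = true → (f (b, c) = true → f (a, c) = true)}) ∩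
      (⋂ a : A, ⋂ b : A, ⋂ c : A, ⋂ d : A,
        {f | f (a, b) = true → (f (c, d) = true → f (a * c, b * d) = true)}) ∩
      {f | f (1, 0) = false} ∩
      (⋂ a : A, ⋂ b : A, ⋂ g : A,
        {f | f (a * g, b * g) = true → (f (a, b) = true ∨ f (g, 0) = true)}) := by
    ext f
    simp only [SpecC.encSet, Set.mem_setOf_eq, Set.mem_inter_iff, Set.mem_iInter]
    tauto
  rw [h1]
  have himp2 : ∀ p q r : A × A,
      IsClosed {f : A × A → Bool | f p = true → (f q = true → f r = true)} := by
    intro p q r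
    have : {f : A × A → Bool | f p = true → (f q = true → f r = true)}
        = {f : A × A → Bool | f p = false} ∪ {f | f q = false} ∪ {f | f r = true} := by
      ext f
      simp only [Set.mem_setOf_eq, Set.mem_union]
      cases hf : f p <;> cases hg : f q <;> simp
    rw [this]
    exact ((SpecC.isClosed_eval p false).union (SpecC.isClosed_eval q false)).union
      (SpecC.isClosed_eval r true)
  have hprime : ∀ p q r : A × A,
      IsClosed {f : A × A → Bool | f p = true → (f q = true ∨ f r = true)} := by
    intro p q r
    have : {f : A × A → Bool | f p = true → (f q = true ∨ f r = true)}
        = {f : A × A → Bool | f p = false} ∪ ({f | f q = true} ∪ {f | f r = true}) := by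
      ext f
      simp only [Set.mem_setOf_eq, Set.mem_union]
      cases hf : f p <;> simp
    rw [this]
    exact (SpecC.isClosed_eval p false).union
      ((SpecC.isClosed_eval q true).union (SpecC.isClosed_eval r true))
  refine (((((isClosed_iInter fun a => SpecC.isClosed_eval _ _).inter
    (isClosed_iInter fun a => isClosed_iInter fun b => SpecC.isClosed_imp _ _)).inter
    (isClosed_iInter fun a => isClosed_iInter fun b => isClosed_iInter fun c =>
      himp2 _ _ _)).inter
    (isClosed_iInter fun a => isClosed_iInter fun b => isClosed_iInter fun c =>
      isClosed_iInter fun d => himp2 _ _ _)).inter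
    (SpecC.isClosed_eval _ _)).inter
    (isClosed_iInter fun a => isClosed_iInter fun b => isClosed_iInter fun g =>
      hprime _ _ _)

lemma SpecC.range_enc (A : Type*) [CommMonoidWithZero A] :
    Set.range (SpecC.enc (A := A)) = SpecC.encSet A := by
  classical
  ext f
  constructor
  · rintro ⟨E, rfl⟩
    obtain ⟨hE10, hEprime⟩ := E.2
    refine ⟨fun a => ?_, fun a b h => ?_, fun a b c h1 h2 => ?_,
      fun a b c d h1 h2 => ?_, ?_, fun a b g h => ?_⟩
    · simpa [SpecC.enc] using E.1.refl a
    · simp only [SpecC.enc, decide_eq_true_eq] at h ⊢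
      exact E.1.symm h
    · simp only [SpecC.enc, decide_eq_true_eq] at h1 h2 ⊢
      exact E.1.trans h1 h2
    · simp only [SpecC.enc, decide_eq_true_eq] at h1 h2 ⊢
      exact E.1.mul h1 h2
    · simpa [SpecC.enc] using hE10
    · simp only [SpecC.enc, decide_eq_true_eq] at h ⊢
      exact hEprime a b g h
  · rintro ⟨hrefl, hsymm, htrans, hmul, h10, hprime⟩
    set E : Con A :=
      { r := fun a b => f (a, b) = true
        iseqv := ⟨fun a => hrefl a, fun h => hsymm _ _ h, fun h1 h2 => htrans _ _ _ h1 h2⟩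
        mul' := fun h1 h2 => hmul _ _ _ _ h1 h2 } with hEdef
    have hP : IsPrimeCon E := by
      constructor
      · show ¬ (f (1, 0) = true)
        simp [h10]
      · exact fun a b g h => hprime a b g h
    refine ⟨⟨E, hP⟩, ?_⟩
    funext p
    show decide ((⟨E, hP⟩ : SpecC A).1 p.1 p.2) = f p
    have : (E : A → A → Prop) p.1 p.2 ↔ f (p.1, p.2) = true := Iff.rfl
    cases hp : f p
    · simp only [decide_eq_false_iff_not]
      intro hc
      have : f (p.1, p.2) = true := hc
      rw [Prod.mk.eta] at this
      rw [this] at hp; exact Bool.noConfusion hp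
    · have : f (p.1, p.2) = true := by rw [Prod.mk.eta]; exact hp
      exact decide_eq_true this


/-- The space `spec_c A` of prime congruences is compact. -/
theorem SpecC.compactSpace (A : Type*) [CommMonoidWithZero A] :
    CompactSpace (SpecC A) := by
  classical
  let t' : TopologicalSpace (SpecC A) :=
    TopologicalSpace.induced (SpecC.enc (A := A)) inferInstance
  -- `enc` is inducing for `t'`
  have hind : @Topology.IsInducing _ _ t' _ (SpecC.enc (A := A)) := ⟨rfl⟩
  -- `univ` is compact for `t'`
  have hcomp' : @IsCompact (SpecC A) t' Set.univ := by
    rw [hind.isCompact_iff, Set.image_univ, SpecC.range_enc]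
    exact (SpecC.isClosed_encSet A).isCompact
  -- the given topology is coarser than `t'`
  have hle : t' ≤ SpecC.instTopologicalSpace A := by
    apply le_generateFrom
    rintro s ⟨a, b, rfl⟩
    have : {E : SpecC A | ¬ E.1 a b}
        = (SpecC.enc (A := A)) ⁻¹' {f | f (a, b) = false} := by
      ext E
      simp [SpecC.enc]
    rw [this]
    exact @Continuous.isOpen_preimage _ _ t' _ _ (continuous_induced_dom) _
      (SpecC.isOpen_eval (a, b) false)
  have hcont : @Continuous _ _ t' (SpecC.instTopologicalSpace A) id :=
    continuous_id_iff_le.mpr hle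
  have hfin : @IsCompact (SpecC A) (SpecC.instTopologicalSpace A) Set.univ := by
    have h := @IsCompact.image _ _ t' (SpecC.instTopologicalSpace A) _ id hcomp' hcont
    rwa [Set.image_id] at h
  exact @CompactSpace.mk _ (SpecC.instTopologicalSpace A) hfin
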